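/- Let n ≥ 1, η > 0, and let f, f^1, …, f^n : ℝ^d → ℝ be differentiable with each ∇f^i L-Lipschitz and with ∇f(x) = (1/n)∑_{i=1}^n ∇f^i(x) for all x. Let x_1, …, x_n ∈ ℝ^d with mean μ = (1/n)∑_i x_i and Γ = (1/n)∑_i ‖x_i − μ‖². Let m_1, …, m_n ∈ ℝ^d be vectors satisfying ‖∇f^i(x_i) − m_i‖ ≤ b_i for nonnegative reals b_i, and set B = (1/n)∑_i b_i. Then ⟨∇f(μ), −(2η/n²) ∑_{i=1}^n m_i⟩ ≤ −(η/n)‖∇f(μ)‖² + (2η/n)B² + (2L²η/n)Γ. -/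

import Mathlib

open Finset RealInnerProductSpace

/-- Upper bound on the inner product of the global gradient at the mean
with the expected one-step displacement of the average model (possibly biased estimators):
`⟨∇f(μ), −(2η/n²) ∑_i m_i⟩ ≤ −(η/n)‖∇f(μ)‖² + (2η/n)B² + (2L²η/n)Γ`. -/
theorem hdo_descent_inner_product_le (d n : ℕ) (hn : 1 ≤ n) (η L : ℝ)
    (hη : 0 < η) (hL : 0 < L)
    (f : EuclideanSpace ℝ (Fin d) → ℝ) (fi : Fin n → EuclideanSpace ℝ (Fin d) → ℝ)
    (hf : Differentiable ℝ f) (hfi : ∀ i, Differentiable ℝ (fi i))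
    (hLipfi : ∀ i x y, ‖gradient (fi i) x - gradient (fi i) y‖ ≤ L * ‖x - y‖)
    (hgrad : ∀ x, gradient f x = (n : ℝ)⁻¹ • ∑ i, gradient (fi i) x)
    (xs m : Fin n → EuclideanSpace ℝ (Fin d)) (b : Fin n → ℝ) (hb : ∀ i, 0 ≤ b i)
    (hbias : ∀ i, ‖gradient (fi i) (xs i) - m i‖ ≤ b i) :
    let μ : EuclideanSpace ℝ (Fin d) := (n : ℝ)⁻¹ • ∑ i, xs i
    let Γ : ℝ := (n : ℝ)⁻¹ * ∑ i, ‖xs i - μ‖ ^ 2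
    let B : ℝ := (n : ℝ)⁻¹ * ∑ i, b i
    ⟪gradient f μ, -((2 * η / (n : ℝ) ^ 2) • ∑ i, m i)⟫
      ≤ -(η / (n : ℝ)) * ‖gradient f μ‖ ^ 2 + 2 * η / (n : ℝ) * B ^ 2
        + 2 * L ^ 2 * η / (n : ℝ) * Γ := by
  intro μ Γ B
  have hN : (0 : ℝ) < (n : ℝ) := by exact_mod_cast hn
  set G : EuclideanSpace ℝ (Fin d) := gradient f μ with hG
  -- rewrite inner product
  have h1 : ⟪G, -((2 * η / (n : ℝ) ^ 2) • ∑ i, m i)⟫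
      = -(2 * η / (n : ℝ) ^ 2) * ∑ i, ⟪G, m i⟫ := by
    rw [inner_neg_right, inner_smul_right, inner_sum]; ring
  -- decompose ∑ ⟪G, m i⟫
  have hsum : ∑ i, gradient (fi i) μ = (n : ℝ) • G := by
    rw [hG, hgrad μ, smul_smul, mul_inv_cancel₀ (ne_of_gt hN), one_smul]
  have h2 : ∑ i, ⟪G, m i⟫
      = (n : ℝ) * ‖G‖ ^ 2 + ∑ i, ⟪G, m i - gradient (fi i) μ⟫ := by
    have : ∀ i, ⟪G, m i⟫ = ⟪G, gradient (fi i) μ⟫ + ⟪G, m i - gradient (fi i) μ⟫ := by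
      intro i; rw [inner_sub_right]; ring
    rw [Finset.sum_congr rfl fun i _ => this i, Finset.sum_add_distrib, ← inner_sum, hsum,
      inner_smul_right, real_inner_self_eq_norm_sq]
  -- bound each error term
  have herr : ∀ i, ‖m i - gradient (fi i) μ‖ ≤ b i + L * ‖xs i - μ‖ := by
    intro i
    calc ‖m i - gradient (fi i) μ‖
        ≤ ‖m i - gradient (fi i) (xs i)‖ + ‖gradient (fi i) (xs i) - gradient (fi i) μ‖ := by
          simpa using norm_sub_le_norm_sub_add_norm_sub (m i) (gradient (fi i) (xs i))
            (gradient (fi i) μ)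
      _ ≤ b i + L * ‖xs i - μ‖ := by
          gcongr
          · rw [norm_sub_rev]; exact hbias i
          · exact hLipfi i (xs i) μ
  have h3 : ∀ i, -(‖G‖ * (b i + L * ‖xs i - μ‖)) ≤ ⟪G, m i - gradient (fi i) μ⟫ := by
    intro i
    have h := abs_real_inner_le_norm G (m i - gradient (fi i) μ)
    have h' := neg_abs_le (⟪G, m i - gradient (fi i) μ⟫)
    have : ‖G‖ * ‖m i - gradient (fi i) μ‖ ≤ ‖G‖ * (b i + L * ‖xs i - μ‖) := by
      gcongr; exact herr i
    linarith
  set A : ℝ := (n : ℝ)⁻¹ * ∑ i, ‖xs i - μ‖ with hA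
  have hA0 : 0 ≤ A := by positivity
  have hB0 : 0 ≤ B := by
    have : 0 ≤ ∑ i, b i := Finset.sum_nonneg fun i _ => hb i
    positivity
  have hΓ0 : A ^ 2 ≤ Γ := by
    have h := sq_sum_le_card_mul_sum_sq (s := (Finset.univ : Finset (Fin n)))
      (f := fun i => ‖xs i - μ‖)
    simp only [Finset.card_univ, Fintype.card_fin] at h
    rw [hA, mul_pow]
    calc ((n:ℝ)⁻¹)^2 * (∑ i, ‖xs i - μ‖)^2 ≤ ((n:ℝ)⁻¹)^2 * ((n:ℝ) * ∑ i, ‖xs i - μ‖^2) := by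
          gcongr
      _ = Γ := by rw [sq, mul_assoc, inv_mul_cancel_left₀ (ne_of_gt hN)]
  have h4 : -(‖G‖ * ((n : ℝ) * (B + L * A))) ≤ ∑ i, ⟪G, m i - gradient (fi i) μ⟫ := by
    have := Finset.sum_le_sum (s := (Finset.univ : Finset (Fin n)))
      (f := fun i => -(‖G‖ * (b i + L * ‖xs i - μ‖)))
      (g := fun i => ⟪G, m i - gradient (fi i) μ⟫) (fun i _ => h3 i)
    calc -(‖G‖ * ((n : ℝ) * (B + L * A)))
        = ∑ i, -(‖G‖ * (b i + L * ‖xs i - μ‖)) := by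
          simp only [Finset.sum_neg_distrib, ← Finset.mul_sum, Finset.sum_add_distrib,
            ← Finset.mul_sum]
          have hBe : B = (n : ℝ)⁻¹ * ∑ i, b i := rfl
          rw [hBe, hA]; field_simp
      _ ≤ _ := this
  -- key scalar inequality
  have hkey : 2 * ‖G‖ * (B + L * A) ≤ ‖G‖ ^ 2 + 2 * B ^ 2 + 2 * L ^ 2 * Γ := by
    nlinarith [sq_nonneg (‖G‖ - (B + L * A)), sq_nonneg (B - L * A), norm_nonneg G,
      mul_pos hL hL]
  rw [h1]
  have hc : (0:ℝ) < 2 * η / (n : ℝ) ^ 2 := by positivity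
  have h5 : (n : ℝ) * ‖G‖ ^ 2 - ‖G‖ * ((n : ℝ) * (B + L * A)) ≤ ∑ i, ⟪G, m i⟫ := by
    rw [h2]; linarith
  calc -(2 * η / (n : ℝ) ^ 2) * ∑ i, ⟪G, m i⟫
      ≤ -(2 * η / (n : ℝ) ^ 2) * ((n : ℝ) * ‖G‖ ^ 2 - ‖G‖ * ((n : ℝ) * (B + L * A))) := by
        have := mul_le_mul_of_nonpos_left h5 (by linarith : -(2 * η / (n : ℝ) ^ 2) ≤ 0)
        linarith
    _ = -(2 * η / (n : ℝ)) * ‖G‖ ^ 2 + (η / (n : ℝ)) * (2 * ‖G‖ * (B + L * A)) := by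
        field_simp; ring
    _ ≤ -(2 * η / (n : ℝ)) * ‖G‖ ^ 2
        + (η / (n : ℝ)) * (‖G‖ ^ 2 + 2 * B ^ 2 + 2 * L ^ 2 * Γ) := by
        gcongr
    _ = -(η / (n : ℝ)) * ‖G‖ ^ 2 + 2 * η / (n : ℝ) * B ^ 2 + 2 * L ^ 2 * η / (n : ℝ) * Γ := by
        ring
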